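/- Let T > 0, let f : ℝ → ℝ be a continuously differentiable T-periodic function, and let α ∈ (0,1). Define the Caputo fractional derivative of f by ᶜD^α f(t) = (1/Γ(1−α)) ∫₀ᵗ (t−s)^{−α} f′(s) ds for t > 0. Then lim_{t→+∞} [ᶜD^α f(t+T) − ᶜD^α f(t)] = 0. -/

import Mathlib

open MeasureTheory intervalIntegral Filter

/-- For a continuously differentiable `T`-periodic `f` and `α ∈ (0,1)`, the Caputo
fractional derivative `ᶜD^α f` satisfies `ᶜD^α f (t+T) - ᶜD^α f (t) → 0` as `t → +∞`. -/
theorem caputo_derivative_asymptotically_periodic_property (T : ℝ) (hT : 0 < T)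
    (f : ℝ → ℝ) (hf : ContDiff ℝ 1 f) (hper : Function.Periodic f T)
    (α : ℝ) (hα : α ∈ Set.Ioo (0 : ℝ) 1)
    (cD : ℝ → ℝ)
    (hcD : ∀ t : ℝ, cD t =
      (1 / Real.Gamma (1 - α)) * ∫ s in (0 : ℝ)..t, (t - s) ^ (-α) * deriv f s) :
    Tendsto (fun t : ℝ => cD (t + T) - cD t) atTop (nhds 0) := by
  obtain ⟨hα0, hα1⟩ := hα
  have hf' : Continuous (deriv f) := hf.continuous_deriv le_rfl
  have hper' : Function.Periodic (deriv f) T := by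
    intro x
    rw [← deriv_comp_add_const]
    congr 1
    funext y; exact hper y
  obtain ⟨C, hC⟩ :=
    (isCompact_Icc (a := -T) (b := (0:ℝ))).exists_bound_of_continuousOn hf'.continuousOn
  set M := max C 0 with hM
  have hM0 : 0 ≤ M := le_max_right _ _
  have hCM : ∀ x ∈ Set.Icc (-T) (0:ℝ), ‖deriv f x‖ ≤ M :=
    fun x hx => (hC x hx).trans (le_max_left _ _)
  set K := |1 / Real.Gamma (1 - α)| * (M * T) with hK
  have key : ∀ t : ℝ, 0 < t → ‖cD (t + T) - cD t‖ ≤ K * t ^ (-α) := by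
    intro t ht
    have hint1 : IntervalIntegrable (fun s => (t - s) ^ (-α) * deriv f s) volume 0 t := by
      apply IntervalIntegrable.mul_continuousOn _ hf'.continuousOn
      have := (intervalIntegrable_rpow' (r := -α) (a := t) (b := 0)
        (by linarith)).comp_sub_left t
      simpa using this
    have hint2 : IntervalIntegrable (fun s => (t - s) ^ (-α) * deriv f s) volume (-T) 0 := by
      apply ContinuousOn.intervalIntegrable
      apply ContinuousOn.mul _ hf'.continuousOn
      apply ContinuousOn.rpow_const (continuous_const.sub continuous_id).continuousOn
      intro x hx
      rw [Set.uIcc_of_le (by linarith : -T ≤ (0:ℝ))] at hx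
      left
      have hx0 : x ≤ 0 := hx.2
      show t - x ≠ 0
      exact ne_of_gt (by linarith)
    have heq : cD (t + T) - cD t =
        (1 / Real.Gamma (1 - α)) * ∫ u in (-T)..(0:ℝ), (t - u) ^ (-α) * deriv f u := by
      rw [hcD, hcD, ← mul_sub]
      congr 1
      have h1 : (∫ u in (-T)..t, (t - u) ^ (-α) * deriv f u)
          = ∫ s in (0:ℝ)..(t+T), (t + T - s) ^ (-α) * deriv f s := by
        have h2 := intervalIntegral.integral_comp_add_right (a := -T) (b := t)
          (fun s => (t + T - s) ^ (-α) * deriv f s) T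
        rw [neg_add_cancel] at h2
        rw [← h2]
        apply intervalIntegral.integral_congr
        intro u _
        simp only
        rw [show t + T - (u + T) = t - u by ring, hper' u]
      rw [← h1, ← intervalIntegral.integral_add_adjacent_intervals hint2 hint1]
      ring
    rw [heq, norm_mul]
    have hb : ‖∫ u in (-T)..(0:ℝ), (t - u) ^ (-α) * deriv f u‖
        ≤ (M * t ^ (-α)) * |(0:ℝ) - (-T)| := by
      apply intervalIntegral.norm_integral_le_of_norm_le_const
      intro x hx
      rw [Set.uIoc_of_le (by linarith : -T ≤ (0:ℝ))] at hx
      have hx0 : x ≤ 0 := hx.2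
      have h1 : (t - x) ^ (-α) ≤ t ^ (-α) :=
        Real.rpow_le_rpow_of_nonpos ht (by linarith) (by linarith)
      have h2 : 0 ≤ (t - x) ^ (-α) := Real.rpow_nonneg (by linarith) _
      rw [norm_mul]
      calc ‖(t - x) ^ (-α)‖ * ‖deriv f x‖
          ≤ t ^ (-α) * M := by
            apply mul_le_mul _ (hCM x ⟨hx.1.le, hx0⟩) (norm_nonneg _)
              (Real.rpow_nonneg ht.le _)
            rwa [Real.norm_eq_abs, abs_of_nonneg h2]
        _ = M * t ^ (-α) := mul_comm _ _
    calc ‖(1 / Real.Gamma (1 - α))‖ * ‖∫ u in (-T)..(0:ℝ), (t - u) ^ (-α) * deriv f u‖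
        ≤ |1 / Real.Gamma (1 - α)| * ((M * t ^ (-α)) * |(0:ℝ) - (-T)|) :=
          mul_le_mul_of_nonneg_left hb (abs_nonneg _)
      _ = K * t ^ (-α) := by
          rw [hK, abs_of_pos (by linarith : (0:ℝ) < 0 - -T)]
          ring
  have hlim : Tendsto (fun t : ℝ => K * t ^ (-α)) atTop (nhds 0) := by
    have := (tendsto_rpow_neg_atTop hα0).const_mul K
    simpa using this
  apply squeeze_zero_norm' _ hlim
  filter_upwards [eventually_gt_atTop 0] with t ht
  exact key t ht
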